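/- Let R be a nontrivial commutative ring with unity and n ≥ 2. Then the full matrix ring M_n(R) is not inner McCoy. -/

import Mathlib

open Polynomial Matrix

def IsInnerMcCoy (S : Type*) [Ring S] : Prop :=
  ∀ f g : Polynomial S, f ≠ 0 → g ≠ 0 → f * g * f = 0 →
    ∃ r : S, r ≠ 0 ∧ f * Polynomial.C r * f = 0

/-- For a nontrivial commutative ring `R` and `n ≥ 2`, the full matrix ring `Mₙ(R)`
is not inner McCoy. -/
theorem matrix_not_innerMcCoy (R : Type*) [CommRing R] [Nontrivial R] (n : ℕ) (hn : 2 ≤ n) :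
    ¬ IsInnerMcCoy (Matrix (Fin n) (Fin n) R) := by
  intro hMc
  have h0 : 0 < n := by omega
  have h1 : 1 < n := by omega
  set z : Fin n := ⟨0, h0⟩ with hz
  set o : Fin n := ⟨1, h1⟩ with ho
  set F : Matrix (Fin n) (Fin n) (Polynomial R) :=
    fun i j => X ^ ((i : ℕ) + n * (j : ℕ)) with hF
  set G : Matrix (Fin n) (Fin n) (Polynomial R) :=
    Matrix.single z z (X ^ n) - Matrix.single o z 1 with hG
  -- sandwich formula
  have hsand : ∀ (M : Matrix (Fin n) (Fin n) R[X]) (i j : Fin n),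
      (F * M * F) i j
        = ∑ l : Fin n, ∑ k : Fin n,
            X ^ ((i : ℕ) + n * (k : ℕ)) * M k l * X ^ ((l : ℕ) + n * (j : ℕ)) := by
    intro M i j
    simp only [Matrix.mul_apply, Finset.sum_mul]
    simp only [hF]
  have hFGF : F * G * F = 0 := by
    refine Matrix.ext fun i j => ?_
    rw [hsand]
    have hterm : ∀ l k : Fin n,
        X ^ ((i : ℕ) + n * (k : ℕ)) * G k l * X ^ ((l : ℕ) + n * (j : ℕ))
          = (if k = z ∧ l = z then X ^ ((i:ℕ) + n + (n*(j:ℕ))) else 0)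
            - (if k = o ∧ l = z then X ^ ((i:ℕ) + n + (n*(j:ℕ))) else 0) := by
      intro l k
      by_cases hk1 : k = z ∧ l = z
      · obtain ⟨rfl, rfl⟩ := hk1
        simp [hG, Matrix.sub_apply, Matrix.single, hz, ho, ← pow_add, Fin.ext_iff]
      · by_cases hk2 : k = o ∧ l = z
        · obtain ⟨rfl, rfl⟩ := hk2
          simp [hG, Matrix.sub_apply, Matrix.single, hz, ho, ← pow_add, Fin.ext_iff]
        · have hGz : G k l = 0 := by
            simp only [hG, Matrix.sub_apply, Matrix.single, Matrix.of_apply]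
            rw [if_neg, if_neg] <;> simp_all [eq_comm, And.comm]
          simp [hGz, hk1, hk2]
    rw [Finset.sum_congr rfl fun l _ => Finset.sum_congr rfl fun k _ => hterm l k]
    simp [Finset.sum_sub_distrib, Finset.sum_ite_eq', ite_and]
  -- move to polynomial ring over matrices
  set f : Polynomial (Matrix (Fin n) (Fin n) R) := matPolyEquiv F with hf
  set g : Polynomial (Matrix (Fin n) (Fin n) R) := matPolyEquiv G with hgdef
  have hfne : f ≠ 0 := by
    intro h
    have : F = 0 := matPolyEquiv.injective (by simpa [hf] using h)
    have h2 := congrFun (congrFun this z) z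
    simp [hF, hz, Matrix.zero_apply] at h2
  have hgne : g ≠ 0 := by
    intro h
    have : G = 0 := matPolyEquiv.injective (by simpa [hgdef] using h)
    have h2 := congrFun (congrFun this o) z
    have hne : ¬ (z = o) := by simp [hz, ho, Fin.ext_iff]
    simp [hG, Matrix.sub_apply, Matrix.single, hne, Matrix.zero_apply] at h2
  have hfgf : f * g * f = 0 := by
    rw [hf, hgdef, ← _root_.map_mul, ← _root_.map_mul, hFGF, map_zero]
  obtain ⟨r, hr, hrf⟩ := hMc f g hfne hgne hfgf
  have hFrF : F * r.map C * F = 0 := by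
    apply matPolyEquiv.injective
    rw [_root_.map_mul, _root_.map_mul, matPolyEquiv_map_C, map_zero]
    exact hrf
  -- conclude r = 0
  have hcond : ∀ (k0 l0 k l : Fin n),
      (n*(k0:ℕ)+(l0:ℕ) = n*(k:ℕ)+(l:ℕ)) ↔ (k = k0 ∧ l = l0) := by
    intro k0 l0 k l
    constructor
    · intro h
      have hll : (l0:ℕ) = (l:ℕ) := by
        have h2 := congrArg (· % n) h
        simpa [Nat.mul_add_mod, Nat.mod_eq_of_lt l.isLt, Nat.mod_eq_of_lt l0.isLt] using h2
      have hkk : (k0:ℕ) = (k:ℕ) := by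
        have : n * (k0:ℕ) = n * (k:ℕ) := by omega
        exact Nat.eq_of_mul_eq_mul_left h0 this
      exact ⟨Fin.ext hkk.symm, Fin.ext hll.symm⟩
    · rintro ⟨rfl, rfl⟩; rfl
  have hr0 : r = 0 := by
    ext k0 l0
    have hzz := congrFun (congrFun hFrF z) z
    rw [hsand] at hzz
    simp only [Matrix.zero_apply] at hzz
    have hpoly : (∑ l : Fin n, ∑ k : Fin n,
        (C (r k l)) * X ^ (n*(k:ℕ) + (l:ℕ))) = 0 := by
      rw [← hzz]
      refine Finset.sum_congr rfl fun l _ => Finset.sum_congr rfl fun k _ => ?_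
      simp only [hz, Matrix.map_apply, Fin.val_mk]
      ring
    have hc := congrArg (fun p => p.coeff (n*(k0:ℕ)+(l0:ℕ))) hpoly
    simp only [finset_sum_coeff, coeff_C_mul, coeff_X_pow, mul_ite, mul_one, mul_zero,
      coeff_zero] at hc
    simp only [hcond] at hc
    simpa [ite_and, Finset.sum_ite_eq', Matrix.zero_apply] using hc
  exact hr (by simpa using hr0)
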